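/- Let ζ be a compactly supported kernel in C^s(ℝ^n) ∩ W^s_1(ℝ^n), (a_i)_{i∈ℤ^n} ∈ ℓ_q with 1/p + 1/q = 1, p ∈ [1, ∞], and let α be a multi-index with |α| < s − n. Then there is a constant C > 0 such that for all ε > h > 0, the function [a](x) = h^n Σ_{j∈ℤ^n} a_j ζ_ε(x − jh) satisfies ‖∂^α[a]‖_{L^∞(ℝ^n)} ≤ C ‖a‖_{q,h} ε^{−n/q − |α|}. -/

import Mathlib

open MeasureTheory ENNReal Metric Finset

noncomputable def pderiv {n : ℕ} (i : Fin n) (f : (Fin n → ℝ) → ℝ) : (Fin n → ℝ) → ℝ :=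
  fun x => fderiv ℝ f x (Pi.single i 1)

noncomputable def mderiv {n : ℕ} (α : Fin n → ℕ) (f : (Fin n → ℝ) → ℝ) : (Fin n → ℝ) → ℝ :=
  (List.finRange n).foldr (fun i g => (pderiv i)^[α i] g) f

def msize {n : ℕ} (α : Fin n → ℕ) : ℕ := ∑ i, α i

noncomputable def scaledKernel {n : ℕ} (ζ : (Fin n → ℝ) → ℝ) (ε : ℝ) : (Fin n → ℝ) → ℝ :=
  fun x => (ε ^ n)⁻¹ * ζ (ε⁻¹ • x)

def grid {n : ℕ} (h : ℝ) (i : Fin n → ℤ) : Fin n → ℝ := fun j => h * (i j : ℝ)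

def MemW {n : ℕ} (s : ℕ) (p : ℝ≥0∞) (f : (Fin n → ℝ) → ℝ) : Prop :=
  ∀ α : Fin n → ℕ, msize α ≤ s → MemLp (mderiv α f) p volume

noncomputable def sobolevSeminorm {n : ℕ} (ℓ : ℕ) (p : ℝ≥0∞) (f : (Fin n → ℝ) → ℝ) : ℝ≥0∞ :=
  ∑ α ∈ Finset.univ.filter (fun α : Fin n → Fin (ℓ + 1) => ∑ i, (α i : ℕ) = ℓ),
    eLpNorm (mderiv (fun i => (α i : ℕ)) f) p volume

noncomputable def sobolevNorm {n : ℕ} (ℓ : ℕ) (p : ℝ≥0∞) (f : (Fin n → ℝ) → ℝ) : ℝ≥0∞ :=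
  ∑ α ∈ Finset.univ.filter (fun α : Fin n → Fin (ℓ + 1) => ∑ i, (α i : ℕ) ≤ ℓ),
    eLpNorm (mderiv (fun i => (α i : ℕ)) f) p volume

noncomputable def discNorm {n : ℕ} (p : ℝ≥0∞) (h : ℝ) (g : (Fin n → ℤ) → ℝ) : ℝ≥0∞ :=
  if p = ∞ then ⨆ i, (‖g i‖₊ : ℝ≥0∞)
  else (∑' i : Fin n → ℤ, ENNReal.ofReal (h ^ n * |g i| ^ p.toReal)) ^ (1 / p.toReal)

structure IsKernelOfOrder (n k : ℕ) (ζ : (Fin n → ℝ) → ℝ) : Prop where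
  cont : Continuous ζ
  integrable : Integrable ζ
  unit_mass : ∫ x, ζ x = 1
  moments : ∀ α : Fin n → ℕ, 1 ≤ msize α → msize α ≤ k - 1 →
      ∫ x : Fin n → ℝ, (∏ i, x i ^ α i) * ζ x = 0
  absMoment : Integrable (fun x : Fin n → ℝ => ‖x‖ ^ k * |ζ x|)

noncomputable def quasiInterp {n : ℕ} (h ε : ℝ) (ζ : (Fin n → ℝ) → ℝ)
    (c : (Fin n → ℤ) → ℝ) : (Fin n → ℝ) → ℝ :=
  fun x => h ^ n * ∑' j : Fin n → ℤ, c j * scaledKernel ζ ε (x - grid h j)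

open Filter Topology

variable {n : ℕ}

noncomputable def Dl (l : List (Fin n)) (f : (Fin n → ℝ) → ℝ) : (Fin n → ℝ) → ℝ :=
  l.foldr (fun i g => pderiv i g) f

lemma Dl_cons (i : Fin n) (l) (f) : Dl (i :: l) f = pderiv i (Dl l f) := rfl

lemma Dl_append (l₁ l₂ : List (Fin n)) (f) : Dl (l₁ ++ l₂) f = Dl l₁ (Dl l₂ f) := by
  simp [Dl, List.foldr_append]

lemma Dl_replicate (k : ℕ) (i : Fin n) (f) : Dl (List.replicate k i) f = (pderiv i)^[k] f := by
  induction k with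
  | zero => rfl
  | succ k ih => rw [List.replicate_succ, Dl_cons, ih, Function.iterate_succ_apply']

lemma mderiv_eq_Dl (α : Fin n → ℕ) (f) :
    mderiv α f = Dl ((List.finRange n).flatMap (fun i => List.replicate (α i) i)) f := by
  rw [mderiv]
  induction (List.finRange n) with
  | nil => rfl
  | cons i l ih => rw [List.foldr_cons, ih, List.flatMap_cons, Dl_append, Dl_replicate]

lemma length_mlist (α : Fin n → ℕ) :
    ((List.finRange n).flatMap (fun i => List.replicate (α i) i)).length = msize α := by
  rw [List.length_flatMap, msize, Fin.sum_univ_def]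
  congr 1
  apply List.map_congr_left
  intro i _
  simp

lemma pderiv_congr_nhds {f g : (Fin n → ℝ) → ℝ} {x} (i : Fin n) (h : f =ᶠ[𝓝 x] g) :
    pderiv i f =ᶠ[𝓝 x] pderiv i g :=
  h.eventuallyEq_nhds.mono fun _ hy => by unfold pderiv; rw [hy.fderiv_eq]

lemma Dl_congr_nhds {f g : (Fin n → ℝ) → ℝ} {x} (l : List (Fin n)) (h : f =ᶠ[𝓝 x] g) :
    Dl l f =ᶠ[𝓝 x] Dl l g := by
  induction l with
  | nil => exact h
  | cons i l ih => exact pderiv_congr_nhds i ih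

lemma pderiv_contDiff {f : (Fin n → ℝ) → ℝ} (i : Fin n) (m : ℕ)
    (hf : ContDiff ℝ ((m + 1 : ℕ) : ℕ∞) f) : ContDiff ℝ (m : ℕ∞) (pderiv i f) := by
  have h1 : ContDiff ℝ (m : ℕ∞) (fderiv ℝ f) :=
    hf.fderiv_right (by exact_mod_cast le_refl (m + 1 : ℕ∞))
  exact h1.clm_apply contDiff_const

lemma Dl_contDiff {f : (Fin n → ℝ) → ℝ} (l : List (Fin n)) (m : ℕ)
    (hf : ContDiff ℝ ((l.length + m : ℕ) : ℕ∞) f) : ContDiff ℝ (m : ℕ∞) (Dl l f) := by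
  induction l generalizing m with
  | nil => exact (by simpa [Dl] using hf)
  | cons i l ih =>
      rw [Dl_cons]
      refine pderiv_contDiff i m (ih (m + 1) ?_)
      have : l.length + (m + 1) = (i :: l).length + m := by simp [List.length_cons]; omega
      rw [this]
      exact hf

lemma tsupport_pderiv_subset {f : (Fin n → ℝ) → ℝ} (i : Fin n) :
    tsupport (pderiv i f) ⊆ tsupport f := by
  apply closure_minimal _ (isClosed_tsupport f)
  intro x hx
  apply support_fderiv_subset (𝕜 := ℝ)
  intro h0
  exact hx (by unfold pderiv; rw [h0]; simp)

lemma tsupport_Dl_subset {f : (Fin n → ℝ) → ℝ} (l : List (Fin n)) :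
    tsupport (Dl l f) ⊆ tsupport f := by
  induction l with
  | nil => exact subset_rfl
  | cons i l ih => exact (tsupport_pderiv_subset i).trans ih

lemma Dl_differentiable {f : (Fin n → ℝ) → ℝ} (l : List (Fin n))
    (hf : ContDiff ℝ ((l.length + 1 : ℕ) : ℕ∞) f) : Differentiable ℝ (Dl l f) :=
  (Dl_contDiff l 1 hf).differentiable (by simp)

lemma pderiv_sum {ι : Type*} (S : Finset ι) (g : ι → (Fin n → ℝ) → ℝ) {x} (i : Fin n)
    (hg : ∀ j ∈ S, DifferentiableAt ℝ (g j) x) :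
    pderiv i (fun y => ∑ j ∈ S, g j y) x = ∑ j ∈ S, pderiv i (g j) x := by
  unfold pderiv
  rw [fderiv_fun_sum hg]
  simp

lemma Dl_sum {ι : Type*} (l : List (Fin n)) (S : Finset ι) (g : ι → (Fin n → ℝ) → ℝ)
    (hg : ∀ j ∈ S, ContDiff ℝ ((l.length : ℕ) : ℕ∞) (g j)) :
    ∀ x, Dl l (fun y => ∑ j ∈ S, g j y) x = ∑ j ∈ S, Dl l (g j) x := by
  induction l with
  | nil => intro x; rfl
  | cons i l ih =>
      intro x
      have hlen : ∀ j ∈ S, ContDiff ℝ ((l.length + 1 : ℕ) : ℕ∞) (g j) := by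
        intro j hj
        have := hg j hj
        simpa [List.length_cons] using this
      have hg' : ∀ j ∈ S, ContDiff ℝ ((l.length : ℕ) : ℕ∞) (g j) := fun j hj =>
        (hlen j hj).of_le (by exact_mod_cast Nat.le_succ _)
      rw [Dl_cons]
      have heq : Dl l (fun y => ∑ j ∈ S, g j y) = fun y => ∑ j ∈ S, Dl l (g j) y :=
        funext (ih hg')
      rw [heq]
      refine pderiv_sum S _ i fun j hj => ?_
      exact (Dl_differentiable l (hlen j hj)).differentiableAt

lemma pderiv_const_mul (k : ℝ) {f : (Fin n → ℝ) → ℝ} {x} (i : Fin n)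
    (hf : DifferentiableAt ℝ f x) :
    pderiv i (fun y => k * f y) x = k * pderiv i f x := by
  unfold pderiv
  rw [fderiv_const_mul hf]
  simp

lemma Dl_const_mul (l : List (Fin n)) (k : ℝ) {f : (Fin n → ℝ) → ℝ}
    (hf : ContDiff ℝ ((l.length : ℕ) : ℕ∞) f) :
    ∀ x, Dl l (fun y => k * f y) x = k * Dl l f x := by
  induction l with
  | nil => intro x; rfl
  | cons i l ih =>
      intro x
      have hlen : ContDiff ℝ ((l.length + 1 : ℕ) : ℕ∞) f := by
        simpa [List.length_cons] using hf
      have hf' : ContDiff ℝ ((l.length : ℕ) : ℕ∞) f :=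
        hlen.of_le (by exact_mod_cast Nat.le_succ _)
      rw [Dl_cons]
      have heq : Dl l (fun y => k * f y) = fun y => k * Dl l f y := funext (ih hf')
      rw [heq]
      exact pderiv_const_mul k i (Dl_differentiable l hlen).differentiableAt

lemma pderiv_comp_affine (c : ℝ) (t : Fin n → ℝ) {f : (Fin n → ℝ) → ℝ} {x} (i : Fin n)
    (hf : DifferentiableAt ℝ f (c • x + t)) :
    pderiv i (fun y => f (c • y + t)) x = c * pderiv i f (c • x + t) := by
  unfold pderiv
  have hA : HasFDerivAt (fun y : Fin n → ℝ => c • y + t)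
      (c • ContinuousLinearMap.id ℝ (Fin n → ℝ)) x :=
    ((hasFDerivAt_id x).const_smul c).add_const t
  have h2 := (hf.hasFDerivAt.comp x hA).fderiv
  have h3 : (fun y => f (c • y + t)) = f ∘ fun y => c • y + t := rfl
  rw [h3, h2]
  simp [smul_eq_mul, mul_comm]

lemma Dl_comp_affine (l : List (Fin n)) (c : ℝ) (t : Fin n → ℝ) {f : (Fin n → ℝ) → ℝ}
    (hf : ContDiff ℝ ((l.length : ℕ) : ℕ∞) f) :
    ∀ x, Dl l (fun y => f (c • y + t)) x = c ^ l.length * Dl l f (c • x + t) := by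
  induction l with
  | nil => intro x; simp [Dl]
  | cons i l ih =>
      intro x
      have hlen : ContDiff ℝ ((l.length + 1 : ℕ) : ℕ∞) f := by
        simpa [List.length_cons] using hf
      have hf' : ContDiff ℝ ((l.length : ℕ) : ℕ∞) f :=
        hlen.of_le (by exact_mod_cast Nat.le_succ _)
      rw [Dl_cons]
      have heq : Dl l (fun y => f (c • y + t)) = fun y => c ^ l.length * Dl l f (c • y + t) :=
        funext (ih hf')
      rw [heq]
      have hD : Differentiable ℝ (Dl l f) := Dl_differentiable l hlen
      have h1 : pderiv i (fun y => c ^ l.length * Dl l f (c • y + t)) x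
          = c ^ l.length * pderiv i (fun y => Dl l f (c • y + t)) x := by
        apply pderiv_const_mul
        exact ((hD.differentiableAt).comp x
          ((differentiable_id.const_smul c).add_const t).differentiableAt)
      rw [h1, pderiv_comp_affine c t i hD.differentiableAt]
      rw [Dl_cons]
      simp [List.length_cons, pow_succ]
      ring

lemma key {n : ℕ} (ζ : (Fin n → ℝ) → ℝ) (a : (Fin n → ℤ) → ℝ) (α : Fin n → ℕ)
    (R M : ℝ) (hR0 : 0 ≤ R) (hR : tsupport ζ ⊆ closedBall 0 R)
    (L : List (Fin n)) (hζL : ContDiff ℝ ((L.length : ℕ) : ℕ∞) ζ)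
    (hM : ∀ y, ‖Dl L ζ y‖ ≤ M)
    (hLα : L = (List.finRange n).flatMap fun i => List.replicate (α i) i)
    {ε h : ℝ} (hh : 0 < h) (hhε : h < ε) (x : Fin n → ℝ) :
    ∃ S : Finset (Fin n → ℤ),
      ((S.card : ℝ) ≤ ((2*R+3) * (ε/h))^n) ∧
      ‖mderiv α (quasiInterp h ε ζ a) x‖ ≤
        h^n * (ε^n)⁻¹ * (ε⁻¹)^(L.length) * M * ∑ j ∈ S, |a j| := by
  have hε : 0 < ε := hh.trans hhε
  set S : Finset (Fin n → ℤ) :=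
    Fintype.piFinset fun i => Finset.Icc ⌈(x i - ε*(R+1))/h⌉ ⌊(x i + ε*(R+1))/h⌋ with hS
  refine ⟨S, ?_, ?_⟩
  · -- cardinality bound
    have hu : (1:ℝ) ≤ ε/h := (one_le_div hh).2 hhε.le
    have hpos : (0:ℝ) ≤ (2*R+3)*(ε/h) := by positivity
    have h1 : ∀ i : Fin n,
        (((Finset.Icc ⌈(x i - ε*(R+1))/h⌉ ⌊(x i + ε*(R+1))/h⌋).card : ℝ)) ≤ (2*R+3)*(ε/h) := by
      intro i
      rw [Int.card_Icc]
      set z : ℤ := ⌊(x i + ε*(R+1))/h⌋ + 1 - ⌈(x i - ε*(R+1))/h⌉ with hz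
      rcases le_or_gt z 0 with hz0 | hz0
      · rw [Int.toNat_of_nonpos hz0]; simpa using hpos
      · have hcast : ((z.toNat : ℤ) : ℝ) = (z : ℝ) := by
          rw [Int.toNat_of_nonneg hz0.le]
        push_cast at hcast ⊢
        rw [hcast]
        have hfl : ((⌊(x i + ε*(R+1))/h⌋ : ℤ) : ℝ) ≤ (x i + ε*(R+1))/h := Int.floor_le _
        have hce : (x i - ε*(R+1))/h ≤ ((⌈(x i - ε*(R+1))/h⌉ : ℤ) : ℝ) := Int.le_ceil _
        have hdiff : (x i + ε*(R+1))/h - (x i - ε*(R+1))/h = (2*R+2)*(ε/h) := by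
          field_simp; ring
        push_cast [hz]
        nlinarith [hu, hR0]
    calc ((S.card : ℝ))
        = ∏ i : Fin n, (((Finset.Icc ⌈(x i - ε*(R+1))/h⌉ ⌊(x i + ε*(R+1))/h⌋).card : ℝ)) := by
          rw [hS, Fintype.card_piFinset]; push_cast; rfl
      _ ≤ ∏ i : Fin n, (2*R+3)*(ε/h) :=
          Finset.prod_le_prod (fun i _ => by positivity) (fun i _ => h1 i)
      _ = ((2*R+3)*(ε/h))^n := by simp [Finset.prod_const]
  · -- the pointwise bound
    set g : (Fin n → ℤ) → (Fin n → ℝ) → ℝ :=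
      fun j y => (h^n * a j * (ε^n)⁻¹) * ζ (ε⁻¹ • y + -(ε⁻¹ • grid h j)) with hg
    have hgS : ∀ j : Fin n → ℤ, ContDiff ℝ ((L.length : ℕ) : ℕ∞) (g j) := by
      intro j
      exact contDiff_const.mul
        (hζL.comp ((contDiff_id.const_smul ε⁻¹).add contDiff_const))
    -- local representation
    have ev : quasiInterp h ε ζ a =ᶠ[𝓝 x] fun y => ∑ j ∈ S, g j y := by
      filter_upwards [Metric.ball_mem_nhds x hε] with y hy
      have hvanish : ∀ j ∉ S, a j * scaledKernel ζ ε (y - grid h j) = 0 := by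
        intro j hj
        have hzero : ζ (ε⁻¹ • (y - grid h j)) = 0 := by
          by_contra hne
          apply hj
          have hmem : ε⁻¹ • (y - grid h j) ∈ tsupport ζ :=
            subset_closure (Function.mem_support.2 hne)
          have hnorm : ‖ε⁻¹ • (y - grid h j)‖ ≤ R := by
            have := hR hmem
            rwa [Metric.mem_closedBall, dist_zero_right] at this
          have hnorm2 : ‖y - grid h j‖ ≤ ε * R := by
            rw [norm_smul, Real.norm_eq_abs, abs_of_pos (inv_pos.2 hε)] at hnorm
            calc ‖y - grid h j‖ = ε * (ε⁻¹ * ‖y - grid h j‖) := by field_simp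
              _ ≤ ε * R := by
                  apply mul_le_mul_of_nonneg_left hnorm hε.le
          rw [hS, Fintype.mem_piFinset]
          intro i
          have hcoord : |x i - h * (j i : ℝ)| ≤ ε * (R+1) := by
            have h1 : |x i - y i| ≤ ‖x - y‖ := by
              have := norm_le_pi_norm (x - y) i
              simpa [Real.norm_eq_abs] using this
            have h2 : |y i - h * (j i : ℝ)| ≤ ‖y - grid h j‖ := by
              have := norm_le_pi_norm (y - grid h j) i
              simpa [Real.norm_eq_abs, grid] using this
            have h3 : ‖x - y‖ < ε := by
              have := hy
              rw [Metric.mem_ball, dist_eq_norm] at this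
              rwa [norm_sub_rev] at this
            calc |x i - h * (j i : ℝ)|
                = |(x i - y i) + (y i - h * (j i : ℝ))| := by ring_nf
              _ ≤ |x i - y i| + |y i - h * (j i : ℝ)| := abs_add_le _ _
              _ ≤ ε + ε * R := by linarith
              _ = ε * (R+1) := by ring
          rw [Finset.mem_Icc]
          rw [abs_le] at hcoord
          constructor
          · rw [Int.ceil_le, div_le_iff₀ hh]
            nlinarith [hcoord.1]
          · rw [Int.le_floor, le_div_iff₀ hh]
            nlinarith [hcoord.2]
        simp [scaledKernel, hzero]
      rw [quasiInterp, tsum_eq_sum hvanish, Finset.mul_sum]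
      refine Finset.sum_congr rfl fun j hj => ?_
      rw [hg]
      simp only [scaledKernel]
      rw [smul_sub]
      ring_nf
    have hrep : mderiv α (quasiInterp h ε ζ a) x = ∑ j ∈ S, Dl L (g j) x := by
      rw [mderiv_eq_Dl, ← hLα]
      rw [(Dl_congr_nhds L ev).self_of_nhds]
      exact Dl_sum L S g (fun j _ => hgS j) x
    have hterm : ∀ j : Fin n → ℤ, Dl L (g j) x
        = (h^n * a j * (ε^n)⁻¹) * ((ε⁻¹)^(L.length) * Dl L ζ (ε⁻¹ • x + -(ε⁻¹ • grid h j))) := by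
      intro j
      rw [hg]
      have h1 := Dl_const_mul L (h^n * a j * (ε^n)⁻¹)
        (f := fun y => ζ (ε⁻¹ • y + -(ε⁻¹ • grid h j)))
        (hζL.comp ((contDiff_id.const_smul ε⁻¹).add contDiff_const)) x
      rw [h1, Dl_comp_affine L ε⁻¹ (-(ε⁻¹ • grid h j)) hζL x]
    rw [hrep]
    calc ‖∑ j ∈ S, Dl L (g j) x‖ ≤ ∑ j ∈ S, ‖Dl L (g j) x‖ := norm_sum_le _ _
      _ ≤ ∑ j ∈ S, h^n * (ε^n)⁻¹ * (ε⁻¹)^(L.length) * M * |a j| := by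
          refine Finset.sum_le_sum fun j _ => ?_
          rw [hterm j]
          have hM0 : 0 ≤ M := (norm_nonneg _).trans (hM 0)
          have hMP : |Dl L ζ (ε⁻¹ • x + -(ε⁻¹ • grid h j))| ≤ M := by
            simpa [Real.norm_eq_abs] using hM (ε⁻¹ • x + -(ε⁻¹ • grid h j))
          calc ‖h ^ n * a j * (ε ^ n)⁻¹ * (ε⁻¹ ^ L.length * Dl L ζ (ε⁻¹ • x + -(ε⁻¹ • grid h j)))‖
              = h ^ n * |a j| * (ε ^ n)⁻¹ *
                  (ε⁻¹ ^ L.length * |Dl L ζ (ε⁻¹ • x + -(ε⁻¹ • grid h j))|) := by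
                simp only [Real.norm_eq_abs, abs_mul]
                rw [abs_of_pos (pow_pos hh n), abs_of_pos (inv_pos.2 (pow_pos hε n)),
                  abs_of_pos (pow_pos (inv_pos.2 hε) (L.length))]
            _ ≤ h ^ n * |a j| * (ε ^ n)⁻¹ * (ε⁻¹ ^ L.length * M) := by
                gcongr
            _ = h^n * (ε^n)⁻¹ * (ε⁻¹)^(L.length) * M * |a j| := by ring
      _ = h^n * (ε^n)⁻¹ * (ε⁻¹)^(L.length) * M * ∑ j ∈ S, |a j| := by
          rw [Finset.mul_sum]


theorem stmt10 {n : ℕ} (s : ℕ) (p q : ℝ≥0∞) (hp : 1 ≤ p) (hpq : 1 / p + 1 / q = 1)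
    (ζ : (Fin n → ℝ) → ℝ) (hc : HasCompactSupport ζ)
    (hsmooth : ContDiff ℝ (s : ℕ∞) ζ) (hW : MemW s 1 ζ)
    (a : (Fin n → ℤ) → ℝ) (ha : Memℓp a q)
    (α : Fin n → ℕ) (hα : msize α + n < s) :
    ∃ C > (0 : ℝ), ∀ ε h : ℝ, 0 < h → h < ε →
      eLpNorm (mderiv α (quasiInterp h ε ζ a)) ∞ volume
        ≤ ENNReal.ofReal (C * ε ^ (-((n : ℝ) / q.toReal) - (msize α : ℝ))) * discNorm q h a := by
  classical
  obtain ⟨R0, hR0⟩ := hc.isBounded.subset_closedBall 0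
  set R : ℝ := max R0 0 with hRdef
  have hRnn : (0:ℝ) ≤ R := le_max_right _ _
  have hR : tsupport ζ ⊆ closedBall 0 R :=
    hR0.trans (closedBall_subset_closedBall (le_max_left _ _))
  set L : List (Fin n) := (List.finRange n).flatMap fun i => List.replicate (α i) i with hLdef
  have hLlen : L.length = msize α := length_mlist α
  have hζL : ContDiff ℝ ((L.length : ℕ) : ℕ∞) ζ := by
    refine hsmooth.of_le ?_
    rw [hLlen]
    exact_mod_cast le_of_lt (lt_of_le_of_lt (Nat.le_add_right _ n) hα)
  obtain ⟨M, hM⟩ : ∃ M, ∀ y, ‖Dl L ζ y‖ ≤ M := by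
    have hcont : Continuous (Dl L ζ) := (Dl_contDiff L 0 (by simpa using hζL)).continuous
    have hsupp : HasCompactSupport (Dl L ζ) :=
      hc.of_isClosed_subset (isClosed_tsupport _) (tsupport_Dl_subset L)
    obtain ⟨M, hM⟩ := hcont.norm.bounded_above_of_compact_support hsupp.norm
    exact ⟨M, fun y => by simpa using hM y⟩
  have hM0 : 0 ≤ M := (norm_nonneg _).trans (hM 0)
  set K : ℝ := 2*R+3 with hKdef
  have hK1 : (1:ℝ) ≤ K := by simp [hKdef]; linarith
  set C0 : ℝ := M * K^n + 1 with hC0def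
  have hC0 : 0 < C0 := by positivity
  have hMK : M * K^n ≤ C0 := by simp [hC0def]
  by_cases hq : q = ∞
  · -- case q = ∞
    subst hq
    have hbdd : BddAbove (Set.range fun i => ‖a i‖) := memℓp_infty_iff.1 ha
    set B : ℝ := ⨆ i, ‖a i‖ with hBdef
    have hB : ∀ i, ‖a i‖ ≤ B := fun i => le_ciSup hbdd i
    have hB0 : 0 ≤ B := (norm_nonneg (a 0)).trans (hB 0)
    refine ⟨C0, hC0, ?_⟩
    intro ε h hh hhε
    have hε : 0 < ε := hh.trans hhε
    have hexpo : (-((n : ℝ) / (∞ : ℝ≥0∞).toReal) - (msize α : ℝ)) = -(msize α : ℝ) := by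
      simp
    have hpt : ∀ x, ‖mderiv α (quasiInterp h ε ζ a) x‖ ≤
        (M * K^n) * (ε ^ (-(msize α : ℝ))) * B := by
      intro x
      obtain ⟨S, hcard, hbd⟩ := key ζ a α R M hRnn hR L hζL hM hLdef hh hhε x
      have hsumB : ∑ j ∈ S, |a j| ≤ (S.card : ℝ) * B := by
        have := Finset.sum_le_card_nsmul S (fun j => |a j|) B
          (fun j _ => by simpa [Real.norm_eq_abs] using hB j)
        simpa [nsmul_eq_mul] using this
      have hrpow : (ε⁻¹ : ℝ)^(L.length) = ε ^ (-(msize α : ℝ)) := by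
        rw [hLlen, Real.rpow_neg hε.le, Real.rpow_natCast, inv_pow]
      refine hbd.trans ?_
      rw [hrpow]
      calc h^n * (ε^n)⁻¹ * ε ^ (-(msize α : ℝ)) * M * ∑ j ∈ S, |a j|
          ≤ h^n * (ε^n)⁻¹ * ε ^ (-(msize α : ℝ)) * M * ((K*(ε/h))^n * B) := by
            have hKe : (0:ℝ) < K*(ε/h) := by positivity
            have h2 : (S.card : ℝ) * B ≤ (K*(ε/h))^n * B := by
              apply mul_le_mul_of_nonneg_right _ hB0
              calc (S.card : ℝ) ≤ ((2*R+3) * (ε/h))^n := hcard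
                _ = (K*(ε/h))^n := by rw [hKdef]
            have h3 := hsumB.trans h2
            apply mul_le_mul_of_nonneg_left h3 (by positivity)
        _ = (M * K^n) * (ε ^ (-(msize α : ℝ))) * B := by
            rw [mul_pow, div_pow]
            field_simp
    have h1 : eLpNorm (mderiv α (quasiInterp h ε ζ a)) ∞ volume
        ≤ ENNReal.ofReal ((M * K^n) * (ε ^ (-(msize α : ℝ))) * B) := by
      rw [eLpNorm_exponent_top]
      exact eLpNormEssSup_le_of_ae_bound (Filter.Eventually.of_forall hpt)
    refine h1.trans ?_
    have hBle : ENNReal.ofReal B ≤ discNorm ∞ h a := by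
      have hmap : ENNReal.ofReal B = ⨆ i, ENNReal.ofReal ‖a i‖ := by
        exact Monotone.map_ciSup_of_continuousAt
          (ENNReal.continuous_ofReal.continuousAt)
          (fun _ _ hxy => ENNReal.ofReal_le_ofReal hxy) hbdd
      rw [discNorm, if_pos rfl, hmap]
      exact le_of_eq (iSup_congr fun i => ofReal_norm (a i))
    calc ENNReal.ofReal ((M * K^n) * (ε ^ (-(msize α : ℝ))) * B)
        = ENNReal.ofReal ((M * K^n) * (ε ^ (-(msize α : ℝ)))) * ENNReal.ofReal B := by
          rw [ENNReal.ofReal_mul (by positivity)]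
      _ ≤ ENNReal.ofReal (C0 * ε ^ (-((n : ℝ) / (∞ : ℝ≥0∞).toReal) - (msize α : ℝ)))
            * discNorm ∞ h a := by
          refine mul_le_mul' (ENNReal.ofReal_le_ofReal ?_) hBle
          rw [hexpo]
          exact mul_le_mul_of_nonneg_right hMK (Real.rpow_nonneg hε.le _)
  · -- case q ≠ ∞
    have hq1 : 1 ≤ q := by
      have h1 : 1/q ≤ 1 := by
        calc 1/q ≤ 1/p + 1/q := le_add_self
          _ = 1 := hpq
      rwa [one_div, ENNReal.inv_le_one] at h1
    have hq0 : q ≠ 0 := by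
      intro h0
      rw [h0] at hq1
      simp at hq1
    have hqrpos : 0 < q.toReal := ENNReal.toReal_pos hq0 hq
    set qr : ℝ := q.toReal with hqrdef
    have hqr1 : 1 ≤ qr := by
      have := ENNReal.toReal_mono hq hq1
      simpa using this
    have hsum : Summable fun i => |a i| ^ qr := by
      have := ha.summable hqrpos
      simpa [Real.norm_eq_abs] using this
    set T : ℝ := ∑' i, |a i| ^ qr with hTdef
    have hT0 : 0 ≤ T := tsum_nonneg fun i => by positivity
    refine ⟨C0, hC0, ?_⟩
    intro ε h hh hhε
    have hε : 0 < ε := hh.trans hhε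
    have hu1 : (1:ℝ) ≤ ε/h := (one_le_div hh).2 hhε.le
    have hdisc : discNorm q h a = ENNReal.ofReal ((h^n * T) ^ (1/qr)) := by
      rw [discNorm, if_neg hq]
      have hsum2 : Summable fun i => h^n * |a i|^qr := hsum.mul_left _
      rw [← ENNReal.ofReal_tsum_of_nonneg (fun i => by positivity) hsum2, tsum_mul_left,
        ← ENNReal.ofReal_rpow_of_nonneg (by positivity) (by positivity)]
    have hpt : ∀ x, ‖mderiv α (quasiInterp h ε ζ a) x‖ ≤
        (M * K^n) * (ε ^ (-((n : ℝ) / qr) - (msize α : ℝ))) * ((h^n * T) ^ (1/qr)) := by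
      intro x
      obtain ⟨S, hcard, hbd⟩ := key ζ a α R M hRnn hR L hζL hM hLdef hh hhε x
      refine hbd.trans ?_
      -- Hölder on the finset
      have hhold : ∑ j ∈ S, |a j| ≤ ((S.card : ℝ)) ^ (1 - qr⁻¹) * T ^ qr⁻¹ := by
        have hH := Real.inner_le_weight_mul_Lp_of_nonneg S hqr1 (fun _ => (1:ℝ))
          (fun j => |a j|) (fun _ => zero_le_one) (fun j => abs_nonneg _)
        simp only [one_mul, Finset.sum_const, nsmul_eq_mul, mul_one] at hH
        refine hH.trans ?_
        have h1 : ∑ j ∈ S, |a j| ^ qr ≤ T :=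
          Summable.sum_le_tsum S (fun j _ => by positivity) hsum
        gcongr
      have hcard' : (S.card : ℝ) ≤ (K*(ε/h))^n := by
        calc (S.card : ℝ) ≤ ((2*R+3)*(ε/h))^n := hcard
          _ = (K*(ε/h))^n := by rw [hKdef]
      set w : ℝ := 1 - qr⁻¹ with hwdef
      have hqrinv1 : qr⁻¹ ≤ 1 := by
        rw [inv_le_one_iff₀]; right; exact hqr1
      have hqrinv0 : (0:ℝ) ≤ qr⁻¹ := by positivity
      have hw0 : 0 ≤ w := by rw [hwdef]; linarith
      have hw1 : w ≤ 1 := by rw [hwdef]; linarith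
      have hKe0 : (0:ℝ) ≤ K*(ε/h) := by positivity
      have hK0 : (0:ℝ) ≤ K := by linarith
      have hstep : ((S.card:ℝ))^w ≤ K^n * (ε/h)^((n:ℝ)*w) := by
        calc ((S.card:ℝ))^w ≤ ((K*(ε/h))^n)^w :=
              Real.rpow_le_rpow (Nat.cast_nonneg _) hcard' hw0
          _ = (K*(ε/h))^((n:ℝ)*w) := by
              rw [← Real.rpow_natCast (K*(ε/h)) n, ← Real.rpow_mul hKe0]
          _ = K^((n:ℝ)*w) * (ε/h)^((n:ℝ)*w) := Real.mul_rpow hK0 (by positivity)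
          _ ≤ K^n * (ε/h)^((n:ℝ)*w) := by
              apply mul_le_mul_of_nonneg_right _ (by positivity)
              calc K^((n:ℝ)*w) ≤ K^((n:ℝ)) := by
                    apply Real.rpow_le_rpow_of_exponent_le hK1
                    nlinarith [(Nat.cast_nonneg n : (0:ℝ) ≤ (n:ℝ))]
                _ = K^n := Real.rpow_natCast K n
      have hsum_bound : ∑ j ∈ S, |a j| ≤ K^n * (ε/h)^((n:ℝ)*w) * T^(qr⁻¹) := by
        refine hhold.trans ?_
        exact mul_le_mul_of_nonneg_right hstep (Real.rpow_nonneg hT0 _)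
      have hid : h^n * (ε^n)⁻¹ * ((ε⁻¹:ℝ))^(L.length) * (ε/h)^((n:ℝ)*w)
          = ε ^ (-((n:ℝ)/qr) - (msize α:ℝ)) * ((h^n:ℝ))^(qr⁻¹) := by
        rw [hLlen]
        have e1 : (h:ℝ)^n = h^((n:ℝ)) := (Real.rpow_natCast h n).symm
        have e2 : ((ε:ℝ)^n)⁻¹ = ε^(-(n:ℝ)) := by
          rw [← Real.rpow_natCast ε n, ← Real.rpow_neg hε.le]
        have e3 : ((ε⁻¹:ℝ))^(msize α) = ε^(-(msize α:ℝ)) := by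
          rw [Real.rpow_neg hε.le, Real.rpow_natCast, inv_pow]
        have e4 : ((ε/h:ℝ))^((n:ℝ)*w) = ε^((n:ℝ)*w) * h^(-((n:ℝ)*w)) := by
          rw [Real.div_rpow hε.le hh.le, Real.rpow_neg hh.le, div_eq_mul_inv]
        have e5 : ((h:ℝ)^n)^(qr⁻¹) = h^((n:ℝ)*qr⁻¹) := by
          rw [← Real.rpow_natCast h n]
          exact (Real.rpow_mul hh.le _ _).symm
        rw [e5, e1, e2, e3, e4]
        have hqrne : qr ≠ 0 := by linarith
        calc h^((n:ℝ)) * ε^(-(n:ℝ)) * ε^(-(msize α:ℝ)) * (ε^((n:ℝ)*w) * h^(-((n:ℝ)*w)))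
            = (ε^(-(n:ℝ)) * ε^(-(msize α:ℝ)) * ε^((n:ℝ)*w)) * (h^((n:ℝ)) * h^(-((n:ℝ)*w))) := by
              ring
          _ = ε^(-(n:ℝ) + -(msize α:ℝ) + (n:ℝ)*w) * h^((n:ℝ) + -((n:ℝ)*w)) := by
              rw [← Real.rpow_add hε, ← Real.rpow_add hε, ← Real.rpow_add hh]
          _ = ε ^ (-((n:ℝ)/qr) - (msize α:ℝ)) * h^((n:ℝ)*qr⁻¹) := by
              congr 1
              · congr 1
                rw [hwdef, div_eq_mul_inv]
                ring
              · rw [hwdef]; ring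
      calc h^n * (ε^n)⁻¹ * ε⁻¹^(L.length) * M * ∑ j ∈ S, |a j|
          ≤ h^n * (ε^n)⁻¹ * ε⁻¹^(L.length) * M * (K^n * (ε/h)^((n:ℝ)*w) * T^(qr⁻¹)) := by
            apply mul_le_mul_of_nonneg_left hsum_bound (by positivity)
        _ = (M * K^n) * (h^n * (ε^n)⁻¹ * ε⁻¹^(L.length) * (ε/h)^((n:ℝ)*w)) * T^(qr⁻¹) := by
            ring
        _ = (M * K^n) * (ε ^ (-((n:ℝ)/qr) - (msize α:ℝ)) * (h^n)^(qr⁻¹)) * T^(qr⁻¹) := by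
            rw [hid]
        _ = (M * K^n) * ε ^ (-((n:ℝ)/qr) - (msize α:ℝ)) * ((h^n*T)^(1/qr)) := by
            rw [one_div, Real.mul_rpow (by positivity) hT0]
            ring
    have h1 : eLpNorm (mderiv α (quasiInterp h ε ζ a)) ∞ volume
        ≤ ENNReal.ofReal ((M * K^n) * (ε ^ (-((n : ℝ) / qr) - (msize α : ℝ))) * ((h^n * T) ^ (1/qr))) := by
      rw [eLpNorm_exponent_top]
      exact eLpNormEssSup_le_of_ae_bound (Filter.Eventually.of_forall hpt)
    refine h1.trans ?_
    rw [hdisc, ENNReal.ofReal_mul (by positivity)]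
    refine mul_le_mul' (ENNReal.ofReal_le_ofReal ?_) le_rfl
    exact mul_le_mul_of_nonneg_right hMK (Real.rpow_nonneg hε.le _)
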